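/- (Theorem 2.) Consider the three-player network game in which player 1 observes only player 2, player 2 observes only player 3, and player 3 observes only player 1, with utilities u₁(X) = −‖x₁ − x₂‖² − λ·[x₁ = x₂], u₂(X) = −‖x₂ − x₃‖² − λ·[x₂ = x₃], u₃(X) = −‖x₃ − x₁‖² − λ·[x₃ = x₁], where strategies x₁, x₂, x₃ ∈ ℤ^d and λ > 1. Then this game has no pure strategy Nash equilibrium: for every profile (x₁, x₂, x₃) some player has a strategy that strictly increases his utility. -/
import Mathlib


open Finset

/-- Squared Euclidean distance between two integer vectors. -/
def sqdist {d : ℕ} (x y : Fin d → ℤ) : ℤ := ∑ k, (x k - y k) ^ 2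

/-- Utility of a player who observes a single neighbor: if the player plays `x` and his
neighbor plays `y`, his utility is `-‖x - y‖² - λ·[x = y]`. -/
noncomputable def pairU {d : ℕ} (lam : ℝ) (x y : Fin d → ℤ) : ℝ :=
  -(sqdist x y : ℝ) - lam * (if x = y then 1 else 0)

lemma sqdist_nonneg {d : ℕ} (x y : Fin d → ℤ) : 0 ≤ sqdist x y :=
  Finset.sum_nonneg fun k _ => sq_nonneg _

lemma sqdist_eq_zero {d : ℕ} {x y : Fin d → ℤ} (h : sqdist x y = 0) : x = y := by
  funext k
  have := (Finset.sum_eq_zero_iff_of_nonneg (fun k _ => sq_nonneg (x k - y k))).mp h k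
    (Finset.mem_univ k)
  have : x k - y k = 0 := by nlinarith [this]
  linarith

/-- If player `x` observing `y` has no improving deviation, then `sqdist x y = 1`. -/
lemma sqdist_eq_one_of_no_dev {d : ℕ} (hd : 1 ≤ d) {lam : ℝ} (hlam : 1 < lam)
    {x y : Fin d → ℤ} (h : ¬ ∃ z : Fin d → ℤ, pairU lam x y < pairU lam z y) :
    sqdist x y = 1 := by
  push_neg at h
  set i : Fin d := ⟨0, hd⟩
  set z : Fin d → ℤ := Function.update y i (y i + 1) with hz
  have hzy : z ≠ y := by
    intro hcontra
    have := congrFun hcontra i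
    simp [hz, Function.update_self] at this
  have hsz : sqdist z y = 1 := by
    unfold sqdist
    rw [Finset.sum_eq_single i]
    · simp [hz, Function.update_self]
    · intro k _ hk
      simp [hz, Function.update_of_ne hk]
    · simp
  have hpz : pairU lam z y = -1 := by
    simp [pairU, hsz, if_neg hzy]
  have hle := h z
  rw [hpz] at hle
  by_cases hxy : x = y
  · exfalso
    have : pairU lam x y = -lam := by simp [pairU, hxy, sqdist]
    rw [this] at hle
    linarith
  · have hpx : pairU lam x y = -(sqdist x y : ℝ) := by simp [pairU, if_neg hxy]
    rw [hpx] at hle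
    have h1 : (sqdist x y : ℝ) ≤ 1 := by linarith
    have h1' : sqdist x y ≤ 1 := by exact_mod_cast h1
    have h0 : sqdist x y ≠ 0 := fun hc => hxy (sqdist_eq_zero hc)
    have := sqdist_nonneg x y
    omega

/-- Theorem 2: the three-player cyclic network game (1 observes 2, 2 observes 3,
3 observes 1) with `λ > 1` has no pure strategy Nash equilibrium: for every profile
`(x₁, x₂, x₃)` some player has a unilateral deviation strictly increasing his utility. -/
theorem no_pure_nash_three_cycle {d : ℕ} (hd : 1 ≤ d) (lam : ℝ) (hlam : 1 < lam)
    (x₁ x₂ x₃ : Fin d → ℤ) :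
    (∃ y : Fin d → ℤ, pairU lam x₁ x₂ < pairU lam y x₂) ∨
    (∃ y : Fin d → ℤ, pairU lam x₂ x₃ < pairU lam y x₃) ∨
    (∃ y : Fin d → ℤ, pairU lam x₃ x₁ < pairU lam y x₁) := by
  by_contra hc
  push_neg at hc
  obtain ⟨h1, h2, h3⟩ := hc
  have s12 : sqdist x₁ x₂ = 1 := sqdist_eq_one_of_no_dev hd hlam (by push_neg; exact h1)
  have s23 : sqdist x₂ x₃ = 1 := sqdist_eq_one_of_no_dev hd hlam (by push_neg; exact h2)
  have s31 : sqdist x₃ x₁ = 1 := sqdist_eq_one_of_no_dev hd hlam (by push_neg; exact h3)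
  have hsum : sqdist x₁ x₂ + sqdist x₂ x₃ + sqdist x₃ x₁ = 3 := by
    rw [s12, s23, s31]; ring
  have heven : Even (sqdist x₁ x₂ + sqdist x₂ x₃ + sqdist x₃ x₁) := by
    unfold sqdist
    rw [← Finset.sum_add_distrib, ← Finset.sum_add_distrib]
    apply Finset.even_sum
    intro k _
    refine ⟨(x₁ k - x₂ k)^2 + (x₁ k - x₂ k)*(x₂ k - x₃ k) + (x₂ k - x₃ k)^2, ?_⟩
    ring
  rw [hsum] at heven
  exact (by decide : ¬ Even (3:ℤ)) heven
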